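/- Let Σ₃ = {a,b,c} and let w, w̃ ∈ Σ₃* with ι(w) = ι(w̃) = 1 < k such that |alph(α₀)| = |alph(α₁)| = 1 (both α-factors unary, their alphabets possibly equal or distinct). Assume m(w) ≠ 𝔴(w) and let y be the unique letter of Σ₃ outside {m(w)[1], 𝔴(w)[1]}. Then w ∼_k w̃ if and only if α_i ∼_{k−1} α̃_i for i ∈ {0,1}, m(w) = m(w̃), 𝔴(w) = 𝔴(w̃), and core₁ ∼_{k−c} corẽ₁, where c := δ_{y ⪯ α₀} + δ_{y ⪯ α₁}. -/

import Mathlib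

open List

variable {α : Type*} [DecidableEq α] [Fintype α]

/-- Simon `k`-congruence: `u` and `v` have the same scattered factors
(subsequences) of length at most `k`. -/
def SimonCongr (k : ℕ) (u v : List α) : Prop :=
  ∀ s : List α, s.length ≤ k → (s.Sublist u ↔ s.Sublist v)

/-- `w` is `k`-universal with respect to the alphabet `S`: every word of length `k`
over `S` is a scattered factor of `w`. -/
def UniversalOn (S : Finset α) (k : ℕ) (w : List α) : Prop :=
  ∀ s : List α, s.length = k → (∀ x ∈ s, x ∈ S) → s.Sublist w

/-- The universality index of `w` w.r.t. the alphabet `S`. -/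
noncomputable def iotaOn (S : Finset α) (w : List α) : ℕ :=
  sSup {k | UniversalOn S k w}

/-- The universality index of `w` w.r.t. the full alphabet. -/
noncomputable def iotaUniv (w : List α) : ℕ := iotaOn Finset.univ w

/-- `a` is an arch w.r.t. `S`: it contains every letter of `S`, and its last letter
belongs to `S` and occurs exactly once in `a`. -/
def IsArchOn (S : Finset α) (a : List α) : Prop :=
  (∀ x ∈ S, x ∈ a) ∧ ∃ a' x, a = a' ++ [x] ∧ x ∈ S ∧ x ∉ a'

/-- `(ars, r)` is the arch factorization of `w` w.r.t. `S`. -/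
def IsArchFactOn (S : Finset α) (w : List α) (ars : List (List α)) (r : List α) : Prop :=
  w = ars.flatten ++ r ∧ (∀ a ∈ ars, IsArchOn S a) ∧ ¬ (∀ x ∈ S, x ∈ r)

/-- `(A, B)` is the α-β-factorization of `w` with `m` arches:
`αᵢ₋₁βᵢ` (for `i ∈ [m]`) together with rest `α_m` is the arch factorization of `w`, and
`(β_{m-i}α_{m-i})^R` together with rest `α₀^R` is the arch factorization of `w^R`. -/
def IsAlphaBetaFact (w : List α) (m : ℕ) (A B : ℕ → List α) : Prop :=
  IsArchFactOn Finset.univ w (List.ofFn fun i : Fin m => A i.val ++ B (i.val + 1)) (A m) ∧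
  IsArchFactOn Finset.univ w.reverse
    (List.ofFn fun i : Fin m => (B (m - i.val) ++ A (m - i.val)).reverse) ((A 0).reverse)

/-- The concatenation `αᵢ βᵢ₊₁ αᵢ₊₁ ⋯ βⱼ αⱼ`. -/
def abSeg (A B : ℕ → List α) (i j : ℕ) : List α :=
  A i ++ (((List.Ico (i + 1) (j + 1)).map fun l => B l ++ A l).flatten)

/-- The core of a `β`-factor: the factor with its first and last letter removed. -/
def coreOf (b : List α) : List α := (b.drop 1).dropLast


section Helpers
set_option linter.unusedSectionVars false
variable {β : Type*} [DecidableEq β]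


variable {β : Type*} [DecidableEq β]

/-- strip a leading marker letter -/
lemma strip_cons (a : β) {u t s : List β} (hu : a ∉ u) :
    a :: s <+ u ++ a :: t ↔ s <+ t := by
  constructor
  · intro h
    induction u with
    | nil =>
      have h' : a :: s <+ a :: t := by simpa using h
      exact cons_sublist_cons.mp h'
    | cons b u ih =>
      rcases sublist_cons_iff.mp (by simpa using h) with h' | ⟨r, hr, _⟩
      · exact ih (fun hm => hu (mem_cons_of_mem _ hm)) h'
      · have hab : a = b := by
          have := congrArg List.head? hr
          simpa using this
        exact absurd hab (by simp at hu; tauto)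
  · intro h
    exact ((cons_sublist_cons.mpr h).trans (sublist_append_right u _))

lemma strip_concat (a : β) {u t s : List β} (ht : a ∉ t) :
    s ++ [a] <+ u ++ a :: t ↔ s <+ u := by
  rw [← reverse_sublist (l₁ := s) (l₂ := u)]
  have e1 : (u ++ a :: t).reverse = t.reverse ++ a :: u.reverse := by simp
  have e2 : (s ++ [a]).reverse = a :: s.reverse := by simp
  rw [← reverse_sublist (l₁ := s ++ [a]), e1, e2]
  exact strip_cons a (by simpa using ht)

lemma mem_of_singleton_sublist {a : β} {l : List β} (h : [a] <+ l) : a ∈ l := by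
  simpa using h.subset (mem_singleton_self a)

lemma pair_after {M c : β} {pre : List β} {q : ℕ} {z : β} (h : M ∉ pre)
    (hs : [M, c] <+ pre ++ M :: replicate q z) : c = z := by
  have : [c] <+ replicate q z := (strip_cons M h).mp hs
  exact eq_of_mem_replicate (mem_of_singleton_sublist this)

lemma pair_before {V c : β} {pre : List β} {p : ℕ} {x : β} (h : V ∉ pre)
    (hs : [c, V] <+ replicate p x ++ V :: pre) : c = x := by
  have hs' : [c] ++ [V] <+ replicate p x ++ V :: pre := hs
  have := (strip_concat V h).mp hs'
  exact eq_of_mem_replicate (mem_of_singleton_sublist this)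


lemma simonCongr_replicate {x : β} {a b t : ℕ} (h : min a t = min b t) :
    SimonCongr t (replicate a x) (replicate b x) := by
  intro s hs
  constructor <;> intro hsub
  · rcases sublist_replicate_iff.mp hsub with ⟨n, hn, rfl⟩
    have : n ≤ t := by simpa using hs
    exact (replicate_sublist_replicate x).mpr (by omega)
  · rcases sublist_replicate_iff.mp hsub with ⟨n, hn, rfl⟩
    have : n ≤ t := by simpa using hs
    exact (replicate_sublist_replicate x).mpr (by omega)

lemma simonCongr_rep_letter {x x' : β} {a b t : ℕ} (ht : 1 ≤ t) (ha : 1 ≤ a)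
    (h : SimonCongr t (replicate a x) (replicate b x')) : x = x' := by
  have h1 : [x] <+ replicate a x := by
    have e : [x] = replicate 1 x := by simp
    rw [e]; exact (replicate_sublist_replicate x).mpr ha
  have h2 := (h [x] (by simpa using ht)).mp h1
  exact eq_of_mem_replicate (mem_of_singleton_sublist h2)

lemma simonCongr_rep_min {x : β} {a b t : ℕ}
    (h : SimonCongr t (replicate a x) (replicate b x)) : min a t = min b t := by
  have h1 : replicate (min a t) x <+ replicate a x :=
    (replicate_sublist_replicate x).mpr (min_le_left _ _)
  have h2 : replicate (min b t) x <+ replicate b x :=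
    (replicate_sublist_replicate x).mpr (min_le_left _ _)
  have e1 := (h _ (by simp)).mp h1
  have e2 := (h _ (by simp)).mpr h2
  have := (replicate_sublist_replicate x).mp e1
  have := (replicate_sublist_replicate x).mp e2
  omega

lemma bounds_min {a b k : ℕ} (h : ∀ n, n ≤ k → (n ≤ a ↔ n ≤ b)) : min a k = min b k := by
  have h1 := h (min a k) (min_le_right _ _)
  have h2 := h (min b k) (min_le_right _ _)
  omega

lemma sub_rep_append {n : ℕ} {a : β} {t s : List β} :
    s <+ replicate n a ++ t ↔ ∃ i s', i ≤ n ∧ s' <+ t ∧ s = replicate i a ++ s' := by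
  constructor
  · intro h
    rcases sublist_append_iff.mp h with ⟨l1, l2, rfl, h1, h2⟩
    rcases sublist_replicate_iff.mp h1 with ⟨i, hi, rfl⟩
    exact ⟨i, l2, hi, h2, rfl⟩
  · rintro ⟨i, s', hi, hs', rfl⟩
    exact Sublist.append ((replicate_sublist_replicate a).mpr hi) hs'

/-- the shape of our one-arch words -/
def Wrd (x v u m z : β) (p r q : ℕ) : List β :=
  replicate p x ++ v :: (replicate r u ++ m :: replicate q z)

lemma Wrd_eq (x v u m z : β) (p r q : ℕ) :
    Wrd x v u m z p r q
      = replicate p x ++ (replicate 1 v ++ (replicate r u ++ (replicate 1 m ++ replicate q z))) := by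
  simp [Wrd]

lemma Wrd_char {x v u m z : β} {p r q : ℕ} {s : List β} :
    s <+ Wrd x v u m z p r q ↔
      ∃ i e1 j e2 l, i ≤ p ∧ e1 ≤ 1 ∧ j ≤ r ∧ e2 ≤ 1 ∧ l ≤ q ∧
        s = replicate i x ++ (replicate e1 v ++ (replicate j u ++
            (replicate e2 m ++ replicate l z))) := by
  rw [Wrd_eq, sub_rep_append]
  constructor
  · rintro ⟨i, s1, hi, hs1, rfl⟩
    rw [sub_rep_append] at hs1
    obtain ⟨e1, s2, he1, hs2, rfl⟩ := hs1
    rw [sub_rep_append] at hs2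
    obtain ⟨j, s3, hj, hs3, rfl⟩ := hs2
    rw [sub_rep_append] at hs3
    obtain ⟨e2, s4, he2, hs4, rfl⟩ := hs3
    rcases sublist_replicate_iff.mp hs4 with ⟨l, hl, rfl⟩
    exact ⟨i, e1, j, e2, l, hi, he1, hj, he2, hl, rfl⟩
  · rintro ⟨i, e1, j, e2, l, hi, he1, hj, he2, hl, rfl⟩
    refine ⟨i, _, hi, ?_, rfl⟩
    rw [sub_rep_append]
    refine ⟨e1, _, he1, ?_, rfl⟩
    rw [sub_rep_append]
    refine ⟨j, _, hj, ?_, rfl⟩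
    rw [sub_rep_append]
    refine ⟨e2, _, he2, ?_, rfl⟩
    exact (replicate_sublist_replicate z).mpr hl

end Helpers


section Helpers2
set_option linter.unusedSectionVars false
set_option linter.unusedVariables false
set_option maxHeartbeats 1000000
variable {β : Type*} [DecidableEq β]

lemma rep_split {a : β} {i b c : ℕ} (h : i = b + c) :
    replicate i a = replicate b a ++ replicate c a := by
  subst h; exact replicate_add b c a

lemma rep_split3 {a : β} {i b c d : ℕ} (h : i = b + c + d) :
    replicate i a = replicate b a ++ (replicate c a ++ replicate d a) := by
  subst h; rw [replicate_add, replicate_add, append_assoc]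

lemma Wrd_transfer {x v u m z : β} {k p r q p' r' q' : ℕ}
    (hk : 2 ≤ k) (hvu : v ≠ u) (hmu : m ≠ u)
    (hx : x = v ∨ x = u) (hz : z = m ∨ z = u)
    (hxr : x = u ∨ 1 ≤ r) (hzr : z = u ∨ 1 ≤ r)
    (hp : 1 ≤ p) (hq : 1 ≤ q) (hp' : 1 ≤ p') (hq' : 1 ≤ q')
    (hP : min p (k-1) ≤ p') (hQ : min q (k-1) ≤ q')
    (hR : min r (k - ((if x = u then 1 else 0) + (if z = u then 1 else 0))) ≤ r')
    {s : List β} (hs : s.length ≤ k) (hsub : s <+ Wrd x v u m z p r q) :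
    s <+ Wrd x v u m z p' r' q' := by
  rw [Wrd_char] at hsub ⊢
  obtain ⟨i, e1, j, e2, l, hi, he1, hj, he2, hl, hseq⟩ := hsub
  have hlen : i + e1 + j + e2 + l ≤ k := by
    have := hs; rw [hseq] at this
    simp only [length_append, length_replicate] at this
    omega
  have hcle : (if x = u then (1:ℕ) else 0) + (if z = u then 1 else 0) ≤ 2 := by
    split <;> split <;> omega
  by_cases hik : k ≤ i
  · -- i = k overflow : s = x^k
    have hi' : i = k := by omega
    have he1' : e1 = 0 := by omega
    have hj' : j = 0 := by omega
    have he2' : e2 = 0 := by omega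
    have hl' : l = 0 := by omega
    rw [hi', he1', hj', he2', hl'] at hseq
    simp only [replicate_zero, nil_append, append_nil] at hseq
    have hpk : k - 1 ≤ p' := by omega
    rcases hx with hxv | hxu
    · -- x = v
      refine ⟨k-1, 1, 0, 0, 0, hpk, le_refl 1, Nat.zero_le _, Nat.zero_le _, Nat.zero_le _, ?_⟩
      rw [hseq, hxv]
      simp only [replicate_zero, nil_append, append_nil]
      exact rep_split (by omega)
    · -- x = u
      rcases hz with hzm | hzu
      · -- z = m ≠ u, so r ≥ 1 and r' ≥ 1
        have hzu' : z ≠ u := by rw [hzm]; exact hmu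
        have hr1 : 1 ≤ r := by tauto
        have hr1' : 1 ≤ r' := by
          rw [if_pos hxu, if_neg hzu'] at hR
          omega
        refine ⟨k-1, 0, 1, 0, 0, hpk, Nat.zero_le _, hr1', Nat.zero_le _, Nat.zero_le _, ?_⟩
        rw [hseq, hxu]
        simp only [replicate_zero, nil_append, append_nil]
        exact rep_split (by omega)
      · -- z = u
        refine ⟨k-1, 0, 0, 0, 1, hpk, Nat.zero_le _, Nat.zero_le _, Nat.zero_le _, hq', ?_⟩
        rw [hseq, hxu, hzu]
        simp only [replicate_zero, nil_append, append_nil]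
        exact rep_split (by omega)
  · by_cases hlk : k ≤ l
    · -- l = k overflow : s = z^k
      have hl' : l = k := by omega
      have hi' : i = 0 := by omega
      have he1' : e1 = 0 := by omega
      have hj' : j = 0 := by omega
      have he2' : e2 = 0 := by omega
      rw [hi', he1', hj', he2'] at hseq
      simp only [replicate_zero, nil_append, append_nil] at hseq
      have hqk : l - 1 ≤ q' := by omega
      rcases hz with hzm | hzu
      · -- z = m
        refine ⟨0, 0, 0, 1, l-1, Nat.zero_le _, Nat.zero_le _, Nat.zero_le _, le_refl 1, hqk, ?_⟩
        rw [hseq, hzm]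
        simp only [replicate_zero, nil_append, append_nil, replicate_one]
        rw [show replicate l m = replicate 1 m ++ replicate (l-1) m from rep_split (by omega)]
        simp
      · -- z = u
        rcases hx with hxv | hxu
        · -- x = v ≠ u so r ≥ 1, and r' ≥ 1
          have hxu' : x ≠ u := by rw [hxv]; exact hvu
          have hr1 : 1 ≤ r := by tauto
          have hr1' : 1 ≤ r' := by
            rw [if_neg hxu', if_pos hzu] at hR
            omega
          refine ⟨0, 0, 1, 0, l-1, Nat.zero_le _, Nat.zero_le _, hr1', Nat.zero_le _, hqk, ?_⟩
          rw [hseq, hzu]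
          simp only [replicate_zero, nil_append, append_nil]
          exact rep_split (by omega)
        · -- x = u
          refine ⟨1, 0, 0, 0, l-1, hp', Nat.zero_le _, Nat.zero_le _, Nat.zero_le _, hqk, ?_⟩
          rw [hseq, hxu, hzu]
          simp only [replicate_zero, nil_append, append_nil]
          exact rep_split (by omega)
    · by_cases hxu : x = u
      · by_cases hzu : z = u
        · -- c = 2
          rw [if_pos hxu, if_pos hzu] at hR
          by_cases hjk : j ≤ k - 2
          · exact ⟨i, e1, j, e2, l, by omega, he1, by omega, he2, by omega, hseq⟩
          · have hj1 : k - 1 ≤ j := by omega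
            have hrk : k - 2 ≤ r' := by omega
            have hsmall : i + e1 + e2 + l ≤ 1 := by omega
            by_cases he1c : e1 = 1
            · -- s = v u^j
              have hi0 : i = 0 := by omega
              have he20 : e2 = 0 := by omega
              have hl0 : l = 0 := by omega
              rw [hi0, he1c, he20, hl0] at hseq
              simp only [replicate_zero, nil_append, append_nil] at hseq
              refine ⟨0, 1, j-1, 0, 1, Nat.zero_le _, le_refl 1, by omega, Nat.zero_le _, hq', ?_⟩
              rw [hseq, hzu]
              simp only [replicate_zero, nil_append, append_nil]
              rw [show replicate j u = replicate (j-1) u ++ replicate 1 u from rep_split (by omega)]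
            · by_cases he2c : e2 = 1
              · -- s = u^j m
                have hi0 : i = 0 := by omega
                have he10 : e1 = 0 := by omega
                have hl0 : l = 0 := by omega
                rw [hi0, he10, he2c, hl0] at hseq
                simp only [replicate_zero, nil_append, append_nil] at hseq
                refine ⟨1, 0, j-1, 1, 0, hp', Nat.zero_le _, by omega, le_refl 1,
                  Nat.zero_le _, ?_⟩
                rw [hseq, hxu]
                simp only [replicate_zero, nil_append, append_nil]
                rw [show replicate j u = replicate 1 u ++ replicate (j-1) u from
                  rep_split (by omega), append_assoc]
              · -- s = u^(i+j+l)
                have he10 : e1 = 0 := by omega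
                have he20 : e2 = 0 := by omega
                rw [he10, he20, hxu, hzu] at hseq
                simp only [replicate_zero, nil_append, append_nil] at hseq
                rw [← replicate_add, ← replicate_add] at hseq
                by_cases hnn : i + (j + l) ≤ 1
                · refine ⟨i + (j + l), 0, 0, 0, 0, by omega, Nat.zero_le _, Nat.zero_le _,
                    Nat.zero_le _, Nat.zero_le _, ?_⟩
                  rw [hseq, hxu]
                  simp
                · refine ⟨1, 0, i + (j + l) - 2, 0, 1, hp', Nat.zero_le _, by omega,
                    Nat.zero_le _, hq', ?_⟩
                  rw [hseq, hxu, hzu]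
                  simp only [replicate_zero, nil_append, append_nil]
                  exact rep_split3 (by omega)
        · -- c = 1 via x = u, z ≠ u
          rw [if_pos hxu, if_neg hzu] at hR
          by_cases hjk : j ≤ k - 1
          · exact ⟨i, e1, j, e2, l, by omega, he1, by omega, he2, by omega, hseq⟩
          · have hjv : j = k := by omega
            have hi0 : i = 0 := by omega
            have he10 : e1 = 0 := by omega
            have he20 : e2 = 0 := by omega
            have hl0 : l = 0 := by omega
            rw [hi0, he10, he20, hl0] at hseq
            simp only [replicate_zero, nil_append, append_nil] at hseq
            refine ⟨1, 0, j-1, 0, 0, hp', Nat.zero_le _, by omega, Nat.zero_le _,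
              Nat.zero_le _, ?_⟩
            rw [hseq, hxu]
            simp only [replicate_zero, nil_append, append_nil]
            exact rep_split (by omega)
      · by_cases hzu : z = u
        · -- c = 1 via z = u, x ≠ u
          rw [if_neg hxu, if_pos hzu] at hR
          by_cases hjk : j ≤ k - 1
          · exact ⟨i, e1, j, e2, l, by omega, he1, by omega, he2, by omega, hseq⟩
          · have hjv : j = k := by omega
            have hi0 : i = 0 := by omega
            have he10 : e1 = 0 := by omega
            have he20 : e2 = 0 := by omega
            have hl0 : l = 0 := by omega
            rw [hi0, he10, he20, hl0] at hseq
            simp only [replicate_zero, nil_append, append_nil] at hseq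
            refine ⟨0, 0, j-1, 0, 1, Nat.zero_le _, Nat.zero_le _, by omega, Nat.zero_le _,
              hq', ?_⟩
            rw [hseq, hzu]
            simp only [replicate_zero, nil_append, append_nil]
            exact rep_split (by omega)
        · -- c = 0
          rw [if_neg hxu, if_neg hzu] at hR
          exact ⟨i, e1, j, e2, l, by omega, he1, by omega, he2, by omega, hseq⟩

/-- generic one-arch word shape -/
def Gw (A0 : List β) (v u m : β) (r : ℕ) (A1 : List β) : List β :=
  A0 ++ v :: (replicate r u ++ m :: A1)

lemma Wrd_eq_Gw (x v u m z : β) (p r q : ℕ) :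
    Wrd x v u m z p r q = Gw (replicate p x) v u m r (replicate q z) := rfl

lemma pair_sub {a b : β} {l1 l2 : List β} (h1 : a ∈ l1) (h2 : b ∈ l2) :
    [a, b] <+ l1 ++ l2 := by
  have : [a] ++ [b] <+ l1 ++ l2 :=
    Sublist.append (singleton_sublist.mpr h1) (singleton_sublist.mpr h2)
  simpa using this

lemma Gw_split1 (A0 : List β) (v u m : β) (r : ℕ) (A1 : List β) :
    Gw A0 v u m r A1 = (A0 ++ [v]) ++ (replicate r u ++ m :: A1) := by
  simp [Gw]

lemma Gw_split2 (A0 : List β) (v u m : β) (r : ℕ) (A1 : List β) :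
    Gw A0 v u m r A1 = (A0 ++ v :: replicate r u) ++ m :: A1 := by
  simp [Gw]

lemma c_VM {A0 : List β} {v u m : β} {r : ℕ} {A1 : List β} :
    [v, m] <+ Gw A0 v u m r A1 := by
  rw [Gw_split1]
  exact pair_sub (by simp) (by simp)

lemma hu_rep {u : β} {r : ℕ} (hr : 1 ≤ r) : u ∈ replicate r u :=
  mem_replicate.mpr ⟨by omega, rfl⟩

lemma Gw_split3 (A0 : List β) (v u m : β) (r : ℕ) (A1 : List β) :
    Gw A0 v u m r A1 = (A0 ++ v :: (replicate r u ++ [m])) ++ A1 := by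
  simp [Gw]

lemma c_UM {A0 : List β} {v u m : β} {r : ℕ} {A1 : List β} (hr : 1 ≤ r) :
    [u, m] <+ Gw A0 v u m r A1 := by
  rw [Gw_split2]
  exact pair_sub (mem_append.mpr (Or.inr (mem_cons_of_mem v (hu_rep hr))))
    mem_cons_self

lemma c_VU {A0 : List β} {v u m : β} {r : ℕ} {A1 : List β} (hr : 1 ≤ r) :
    [v, u] <+ Gw A0 v u m r A1 := by
  rw [Gw_split1]
  exact pair_sub (mem_append.mpr (Or.inr (mem_singleton_self v)))
    (mem_append.mpr (Or.inl (hu_rep hr)))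

lemma c_VC {A0 : List β} {v u m c : β} {r : ℕ} {A1 : List β} (hc : c ∈ A1) :
    [v, c] <+ Gw A0 v u m r A1 := by
  rw [Gw_split1]
  exact pair_sub (by simp) (by simp [hc])

lemma c_MC {A0 : List β} {v u m c : β} {r : ℕ} {A1 : List β} (hc : c ∈ A1) :
    [m, c] <+ Gw A0 v u m r A1 := by
  rw [Gw_split3]
  exact pair_sub (by simp) hc

lemma c_CV {A0 : List β} {v u m c : β} {r : ℕ} {A1 : List β} (hc : c ∈ A0) :
    [c, v] <+ Gw A0 v u m r A1 := by
  rw [Gw]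
  exact pair_sub hc mem_cons_self

lemma f_MC {A0 : List β} {v u m c : β} {r : ℕ} {A1 : List β}
    (h0 : m ∉ A0) (h1 : m ≠ v) (h2 : m ≠ u)
    (h : [m, c] <+ Gw A0 v u m r A1) : c ∈ A1 := by
  rw [Gw_split2] at h
  have hpre : m ∉ A0 ++ v :: replicate r u := by
    intro hmem
    rcases mem_append.mp hmem with h | h
    · exact h0 h
    · rcases mem_cons.mp h with h | h
      · exact h1 h
      · exact h2 (eq_of_mem_replicate h)
  exact mem_of_singleton_sublist ((strip_cons m hpre).mp h)

lemma f_CV {A0 : List β} {v u m c : β} {r : ℕ} {A1 : List β}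
    (h0 : v ∉ A1) (h1 : v ≠ u) (h2 : v ≠ m)
    (h : [c, v] <+ Gw A0 v u m r A1) : c ∈ A0 := by
  have hpost : v ∉ replicate r u ++ m :: A1 := by
    intro hmem
    rcases mem_append.mp hmem with h | h
    · exact h1 (eq_of_mem_replicate h)
    · rcases mem_cons.mp h with h | h
      · exact h2 h
      · exact h0 h
  have h' : [c] ++ [v] <+ A0 ++ v :: (replicate r u ++ m :: A1) := h
  exact mem_of_singleton_sublist ((strip_concat v hpost).mp h')

lemma rep_sub_iff_count {n : ℕ} {a : β} {l : List β} :
    replicate n a <+ l ↔ n ≤ count a l := replicate_sublist_iff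

section Meas
variable {x v u m z : β} {p r q : ℕ} {n : ℕ}

lemma meas_p_V (hMV : m ≠ v) (hUV : u ≠ v) (hzV : z ≠ v) :
    replicate n v <+ Wrd v v u m z p r q ↔ n ≤ p + 1 := by
  rw [rep_sub_iff_count]
  simp [Wrd, count_append, count_cons, count_replicate, hMV, hUV, hzV]

lemma meas_p_U (hVU : v ≠ u) (hVM : v ≠ m) (hVz : v ≠ z) :
    replicate n u ++ [v] <+ Wrd u v u m z p r q ↔ n ≤ p := by
  have hpost : v ∉ replicate r u ++ m :: replicate q z := by
    intro hmem
    rcases mem_append.mp hmem with h | h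
    · exact hVU (eq_of_mem_replicate h)
    · rcases mem_cons.mp h with h | h
      · exact hVM h
      · exact hVz (eq_of_mem_replicate h)
  rw [Wrd, strip_concat v hpost]
  exact replicate_sublist_replicate u

lemma meas_q_M (hxM : x ≠ m) (hVM : v ≠ m) (hUM : u ≠ m) :
    replicate n m <+ Wrd x v u m m p r q ↔ n ≤ q + 1 := by
  rw [rep_sub_iff_count]
  simp [Wrd, count_append, count_cons, count_replicate, hxM, hVM, hUM]

lemma meas_q_U (hMx : m ≠ x) (hMV : m ≠ v) (hMU : m ≠ u) :
    m :: replicate n u <+ Wrd x v u m u p r q ↔ n ≤ q := by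
  have hpre : m ∉ replicate p x ++ v :: replicate r u := by
    intro hmem
    rcases mem_append.mp hmem with h | h
    · exact hMx (eq_of_mem_replicate h)
    · rcases mem_cons.mp h with h | h
      · exact hMV h
      · exact hMU (eq_of_mem_replicate h)
  rw [Wrd, show replicate p x ++ v :: (replicate r u ++ m :: replicate q u)
      = (replicate p x ++ v :: replicate r u) ++ m :: replicate q u by simp,
    strip_cons m hpre]
  exact replicate_sublist_replicate u

lemma meas_r_00 (hUx : u ≠ x) (hUV : u ≠ v) (hUM : u ≠ m) (hUz : u ≠ z) :
    replicate n u <+ Wrd x v u m z p r q ↔ n ≤ r := by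
  rw [rep_sub_iff_count]
  simp [Wrd, count_append, count_cons, count_replicate, hUx.symm, hUV.symm, hUM.symm, hUz.symm]

lemma meas_r_10 (hVU : v ≠ u) (hUM : u ≠ m) (hUz : u ≠ z) :
    v :: replicate n u <+ Wrd u v u m z p r q ↔ n ≤ r := by
  have hpre : v ∉ replicate p u := by simp [mem_replicate]; exact fun _ => hVU
  rw [Wrd, strip_cons v hpre, rep_sub_iff_count]
  simp [count_append, count_cons, count_replicate, hUM.symm, hUz.symm]

lemma meas_r_01 (hMU : m ≠ u) (hUx : u ≠ x) (hUV : u ≠ v) :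
    replicate n u ++ [m] <+ Wrd x v u m u p r q ↔ n ≤ r := by
  have hpost : m ∉ replicate q u := by simp [mem_replicate]; exact fun _ => hMU
  rw [Wrd, show replicate p x ++ v :: (replicate r u ++ m :: replicate q u)
      = (replicate p x ++ v :: replicate r u) ++ m :: replicate q u by simp,
    strip_concat m hpost, rep_sub_iff_count]
  simp [count_append, count_cons, count_replicate, hUx.symm, hUV.symm]

lemma meas_r_11 (hVU : v ≠ u) (hMU : m ≠ u) :
    v :: (replicate n u ++ [m]) <+ Wrd u v u m u p r q ↔ n ≤ r := by
  have hpre : v ∉ replicate p u := by simp [mem_replicate]; exact fun _ => hVU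
  have hpost : m ∉ replicate q u := by simp [mem_replicate]; exact fun _ => hMU
  rw [Wrd, strip_cons v hpre, strip_concat m hpost]
  exact replicate_sublist_replicate u

end Meas

end Helpers2

section Fin3
set_option linter.unusedSectionVars false
set_option linter.unusedVariables false
set_option maxHeartbeats 1000000

lemma fin3_resolve {a M V U : Fin 3} (hMV : M ≠ V) (hUM : U ≠ M) (hUV : U ≠ V)
    (h1 : a ≠ M) (h2 : a ≠ V) : a = U := by
  revert hMV hUM hUV h1 h2; revert a M V U; decide

lemma fin3_two {a M V U : Fin 3} (hMV : M ≠ V) (hUM : U ≠ M) (hUV : U ≠ V)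
    (h1 : a ≠ M) : a = V ∨ a = U := by
  revert hMV hUM hUV h1; revert a M V U; decide

lemma fin3_two' {a M V U : Fin 3} (hMV : M ≠ V) (hUM : U ≠ M) (hUV : U ≠ V)
    (h1 : a ≠ V) : a = M ∨ a = U := by
  revert hMV hUM hUV h1; revert a M V U; decide

lemma fin3_third (x : Fin 3) : ∃ b c : Fin 3, b ≠ c ∧ b ≠ x ∧ c ≠ x := by
  revert x; decide

lemma extract {w : List (Fin 3)} {A B : ℕ → List (Fin 3)} (hw : IsAlphaBetaFact w 1 A B)
    (hc0 : (A 0).toFinset.card = 1) (hc1 : (A 1).toFinset.card = 1) :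
    ∃ (V M U x z : Fin 3) (p r q : ℕ),
      (B 1).head? = some V ∧ (B 1).getLast? = some M ∧ M ≠ V ∧ U ≠ M ∧ U ≠ V ∧
      A 0 = replicate p x ∧ A 1 = replicate q z ∧ B 1 = V :: (replicate r U ++ [M]) ∧
      1 ≤ p ∧ 1 ≤ q ∧ (x = V ∨ x = U) ∧ (z = M ∨ z = U) ∧
      (x = U ∨ 1 ≤ r) ∧ (z = U ∨ 1 ≤ r) ∧
      w = Wrd x V U M z p r q := by
  obtain ⟨⟨hw1, harch1, -⟩, ⟨-, harch2, -⟩⟩ := hw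
  simp only [List.ofFn_succ, List.ofFn_zero, Fin.val_zero, Nat.sub_zero, zero_add,
    flatten_cons, flatten_nil, append_nil, mem_singleton, forall_eq] at hw1 harch1 harch2
  obtain ⟨hall1, a', L1, heq1, -, hnot1⟩ := harch1
  obtain ⟨hall2, b', L2, heq2, -, hnot2⟩ := harch2
  -- the alpha factors are unary
  obtain ⟨x, hx⟩ := Finset.card_eq_one.mp hc0
  obtain ⟨z, hz⟩ := Finset.card_eq_one.mp hc1
  have hA0 : A 0 = replicate (A 0).length x := by
    rw [eq_replicate_iff]
    exact ⟨rfl, fun b hb => by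
      have : b ∈ (A 0).toFinset := List.mem_toFinset.mpr hb
      rw [hx] at this; simpa using this⟩
  have hA1 : A 1 = replicate (A 1).length z := by
    rw [eq_replicate_iff]
    exact ⟨rfl, fun b hb => by
      have : b ∈ (A 1).toFinset := List.mem_toFinset.mpr hb
      rw [hz] at this; simpa using this⟩
  have hxA0 : x ∈ A 0 := by
    have : x ∈ (A 0).toFinset := by rw [hx]; simp
    simpa using this
  have hzA1 : z ∈ A 1 := by
    have : z ∈ (A 1).toFinset := by rw [hz]; simp
    simpa using this
  have hp1 : 1 ≤ (A 0).length := length_pos_of_mem ( hxA0)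
  have hq1 : 1 ≤ (A 1).length := length_pos_of_mem ( hzA1)
  -- B 1 is nonempty, indeed with head V
  obtain ⟨b1, b2, hb12, hb1x, hb2x⟩ := fin3_third x
  have hb1B : b1 ∈ B 1 := by
    rcases mem_append.mp (hall1 b1 (Finset.mem_univ _)) with h | h
    · rw [hA0] at h; exact absurd (eq_of_mem_replicate h) hb1x
    · exact h
  have hb2B : b2 ∈ B 1 := by
    rcases mem_append.mp (hall1 b2 (Finset.mem_univ _)) with h | h
    · rw [hA0] at h; exact absurd (eq_of_mem_replicate h) hb2x
    · exact h
  obtain ⟨V, t, hBeq⟩ : ∃ V t, B 1 = V :: t := by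
    cases hB : B 1 with
    | nil => rw [hB] at hb1B; simp at hb1B
    | cons a t => exact ⟨a, t, rfl⟩
  -- reverse arch gives: V occurs once at the front of B1 ++ A1
  have hrev : B 1 ++ A 1 = L2 :: b'.reverse := by
    have := congrArg List.reverse heq2
    simpa using this
  have hL2 : L2 = V := by
    rw [hBeq] at hrev
    have := congrArg List.head? hrev
    simpa using this.symm
  have hbrev : b'.reverse = t ++ A 1 := by
    rw [hBeq] at hrev
    have := congrArg List.tail hrev
    simpa using this.symm
  have hVnot : V ∉ t ++ A 1 := by
    intro hmem
    apply hnot2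
    rw [← mem_reverse, hbrev, hL2]
    exact hmem
  have hVt : V ∉ t := fun h => hVnot (mem_append.mpr (Or.inl h))
  have hVA1 : V ∉ A 1 := fun h => hVnot (mem_append.mpr (Or.inr h))
  -- t is nonempty (B 1 contains two distinct letters)
  have htne : t ≠ [] := by
    intro h
    rw [hBeq, h] at hb1B hb2B
    simp at hb1B hb2B
    exact hb12 (hb1B.trans hb2B.symm)
  obtain ⟨mid, M, hteq⟩ : ∃ mid M, t = mid ++ [M] := by
    rcases eq_nil_or_concat t with h | h
    · exact absurd h htne
    · obtain ⟨L, b, hlb⟩ := h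
      exact ⟨L, b, by simpa using hlb⟩
  -- forward arch: M is the last letter and occurs once
  have hgl : (A 0 ++ B 1).getLast? = some M := by
    rw [hBeq, hteq]
    rw [show A 0 ++ V :: (mid ++ [M]) = (A 0 ++ V :: mid) ++ [M] by simp]
    exact getLast?_concat
  have hL1 : L1 = M := by
    rw [heq1] at hgl
    rw [getLast?_concat] at hgl
    exact Option.some_inj.mp hgl
  have ha' : a' = A 0 ++ V :: mid := by
    have h2 := congrArg List.dropLast heq1
    rw [dropLast_concat] at h2
    rw [← h2, hBeq, hteq]
    rw [show A 0 ++ V :: (mid ++ [M]) = (A 0 ++ V :: mid) ++ [M] by simp]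
    rw [dropLast_concat]
  have hMnot : M ∉ A 0 ++ V :: mid := by rw [← ha', ← hL1]; exact hnot1
  have hMA0 : M ∉ A 0 := fun h => hMnot (mem_append.mpr (Or.inl h))
  have hMV : M ≠ V := by
    intro h
    exact hVt (by rw [← h, hteq]; simp)
  have hMmid : M ∉ mid := fun h => hMnot (by simp [h])
  -- the third letter U
  obtain ⟨U, hUM, hUV⟩ : ∃ U : Fin 3, U ≠ M ∧ U ≠ V := by
    obtain ⟨b, c, hbc, hbM, hcM⟩ := fin3_third M
    by_cases hbV : b = V
    · exact ⟨c, hcM, fun h => hbc (hbV.trans h.symm)⟩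
    · exact ⟨b, hbM, hbV⟩
  have hmid : mid = replicate mid.length U := by
    rw [eq_replicate_iff]
    refine ⟨rfl, fun b hb => ?_⟩
    have hbM : b ≠ M := fun h => hMmid (h ▸ hb)
    have hbV : b ≠ V := fun h => hVt (h ▸ (by rw [hteq]; simp [hb]))
    exact (fin3_resolve hMV hUM hUV hbM hbV).symm ▸ rfl
  have hBfin : B 1 = V :: (replicate mid.length U ++ [M]) := by
    rw [hBeq, hteq, ← hmid]
  have hxM : x ≠ M := fun h => hMA0 (h ▸ hxA0)
  have hzV : z ≠ V := fun h => hVA1 (h ▸ hzA1)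
  refine ⟨V, M, U, x, z, (A 0).length, mid.length, (A 1).length,
    by rw [hBeq]; simp, ?_, hMV, hUM, hUV, hA0, hA1, hBfin, hp1, hq1,
    fin3_two hMV hUM hUV hxM, fin3_two' hMV hUM hUV hzV, ?_, ?_, ?_⟩
  · rw [hBeq, hteq, show V :: (mid ++ [M]) = (V :: mid) ++ [M] by simp]
    exact getLast?_concat
  · rcases mem_append.mp (hall1 U (Finset.mem_univ _)) with h | h
    · rw [hA0] at h
      exact Or.inl (eq_of_mem_replicate h).symm
    · rw [hBfin] at h
      simp only [mem_cons, mem_append, mem_replicate, mem_singleton] at h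
      rcases h with h | ⟨h, -⟩ | h
      · exact absurd h hUV
      · exact Or.inr (by omega)
      · exact absurd h (by simp [hUM])
  · have h := hall2 U (Finset.mem_univ _)
    rw [mem_reverse] at h
    rcases mem_append.mp h with h | h
    · rw [hBfin] at h
      simp only [mem_cons, mem_append, mem_replicate, mem_singleton] at h
      rcases h with h | ⟨h, -⟩ | h
      · exact absurd h hUV
      · exact Or.inr (by omega)
      · exact absurd h (by simp [hUM])
    · rw [hA1] at h
      exact Or.inl (eq_of_mem_replicate h).symm
  · rw [hw1, hA0, hA1, hBfin]
    simp [Wrd]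

lemma extract' {w : List (Fin 3)} {A B : ℕ → List (Fin 3)} (hw : IsAlphaBetaFact w 1 A B) :
    (∃ c : Fin 3, B 1 = [c] ∧ (∀ d : Fin 3, d ≠ c → d ∈ A 0) ∧ (∀ d : Fin 3, d ≠ c → d ∈ A 1)
      ∧ w = A 0 ++ c :: A 1) ∨
    (∃ (V M U : Fin 3) (r : ℕ),
      (B 1).head? = some V ∧ (B 1).getLast? = some M ∧ M ≠ V ∧ U ≠ M ∧ U ≠ V ∧
      B 1 = V :: (replicate r U ++ [M]) ∧
      M ∉ A 0 ∧ V ∉ A 1 ∧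
      (∀ b ∈ A 0, b = V ∨ b = U) ∧ (∀ b ∈ A 1, b = M ∨ b = U) ∧
      (U ∈ A 0 ∨ 1 ≤ r) ∧ (U ∈ A 1 ∨ 1 ≤ r) ∧
      w = Gw (A 0) V U M r (A 1)) := by
  obtain ⟨⟨hw1, harch1, -⟩, ⟨-, harch2, hrest2⟩⟩ := hw
  simp only [List.ofFn_succ, List.ofFn_zero, Fin.val_zero, Nat.sub_zero, zero_add,
    flatten_cons, flatten_nil, append_nil, mem_singleton, forall_eq] at hw1 harch1 harch2 hrest2
  obtain ⟨hall1, a', L1, heq1, -, hnot1⟩ := harch1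
  obtain ⟨hall2, b', L2, heq2, -, hnot2⟩ := harch2
  -- B 1 nonempty
  have hBne : B 1 ≠ [] := by
    intro h
    apply hrest2
    intro c hc
    rw [mem_reverse]
    have := hall1 c hc
    rw [h, append_nil] at this
    exact this
  obtain ⟨V, t, hBeq⟩ : ∃ V t, B 1 = V :: t := by
    cases hB : B 1 with
    | nil => exact absurd hB hBne
    | cons a t => exact ⟨a, t, rfl⟩
  -- reverse arch: V occurs once at front of B1 ++ A1
  have hrev : B 1 ++ A 1 = L2 :: b'.reverse := by
    have := congrArg List.reverse heq2
    simpa using this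
  have hL2 : L2 = V := by
    rw [hBeq] at hrev
    have := congrArg List.head? hrev
    simpa using this.symm
  have hbrev : b'.reverse = t ++ A 1 := by
    rw [hBeq] at hrev
    have := congrArg List.tail hrev
    simpa using this.symm
  have hVnot : V ∉ t ++ A 1 := by
    intro hmem
    apply hnot2
    rw [← mem_reverse, hbrev, hL2]
    exact hmem
  have hVt : V ∉ t := fun h => hVnot (mem_append.mpr (Or.inl h))
  have hVA1 : V ∉ A 1 := fun h => hVnot (mem_append.mpr (Or.inr h))
  cases ht : t with
  | nil =>
    -- singleton case
    left
    rw [ht] at hBeq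
    refine ⟨V, hBeq, ?_, ?_, by rw [hw1, hBeq]; simp⟩
    · intro d hd
      rcases mem_append.mp (hall1 d (Finset.mem_univ _)) with h | h
      · exact h
      · rw [hBeq] at h
        simp at h
        exact absurd h hd
    · intro d hd
      have h := hall2 d (Finset.mem_univ _)
      rw [mem_reverse] at h
      rcases mem_append.mp h with h | h
      · rw [hBeq] at h
        simp at h
        exact absurd h hd
      · exact h
  | cons t0 ts =>
    right
    have htne : t ≠ [] := by rw [ht]; simp
    obtain ⟨mid, M, hteq⟩ : ∃ mid M, t = mid ++ [M] := by
      rcases eq_nil_or_concat t with h | h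
      · exact absurd h htne
      · obtain ⟨L, b, hlb⟩ := h
        exact ⟨L, b, by simpa using hlb⟩
    have hgl : (A 0 ++ B 1).getLast? = some M := by
      rw [hBeq, hteq]
      rw [show A 0 ++ V :: (mid ++ [M]) = (A 0 ++ V :: mid) ++ [M] by simp]
      exact getLast?_concat
    have hL1 : L1 = M := by
      rw [heq1] at hgl
      rw [getLast?_concat] at hgl
      exact Option.some_inj.mp hgl
    have ha' : a' = A 0 ++ V :: mid := by
      have h2 := congrArg List.dropLast heq1
      rw [dropLast_concat] at h2
      rw [← h2, hBeq, hteq]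
      rw [show A 0 ++ V :: (mid ++ [M]) = (A 0 ++ V :: mid) ++ [M] by simp]
      rw [dropLast_concat]
    have hMnot : M ∉ A 0 ++ V :: mid := by rw [← ha', ← hL1]; exact hnot1
    have hMA0 : M ∉ A 0 := fun h => hMnot (mem_append.mpr (Or.inl h))
    have hMV : M ≠ V := by
      intro h
      exact hVt (by rw [← h, hteq]; simp)
    have hMmid : M ∉ mid := fun h => hMnot (by simp [h])
    obtain ⟨U, hUM, hUV⟩ : ∃ U : Fin 3, U ≠ M ∧ U ≠ V := by
      obtain ⟨b, c, hbc, hbM, hcM⟩ := fin3_third M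
      by_cases hbV : b = V
      · exact ⟨c, hcM, fun h => hbc (hbV.trans h.symm)⟩
      · exact ⟨b, hbM, hbV⟩
    have hmid : mid = replicate mid.length U := by
      rw [eq_replicate_iff]
      refine ⟨rfl, fun b hb => ?_⟩
      have hbM : b ≠ M := fun h => hMmid (h ▸ hb)
      have hbV : b ≠ V := fun h => hVt (h ▸ (by rw [hteq]; simp [hb]))
      exact (fin3_resolve hMV hUM hUV hbM hbV).symm ▸ rfl
    have hBfin : B 1 = V :: (replicate mid.length U ++ [M]) := by
      rw [hBeq, hteq, ← hmid]
    refine ⟨V, M, U, mid.length, by rw [hBeq]; simp, ?_, hMV, hUM, hUV, hBfin, hMA0, hVA1,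
      ?_, ?_, ?_, ?_, ?_⟩
    · rw [hBeq, hteq, show V :: (mid ++ [M]) = (V :: mid) ++ [M] by simp]
      exact getLast?_concat
    · intro b hb
      have hbM : b ≠ M := fun h => hMA0 (h ▸ hb)
      exact fin3_two hMV hUM hUV hbM
    · intro b hb
      have hbV : b ≠ V := fun h => hVA1 (h ▸ hb)
      exact fin3_two' hMV hUM hUV hbV
    · rcases mem_append.mp (hall1 U (Finset.mem_univ _)) with h | h
      · exact Or.inl h
      · rw [hBfin] at h
        simp only [mem_cons, mem_append, mem_replicate, mem_singleton] at h
        rcases h with h | ⟨h, -⟩ | h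
        · exact absurd h hUV
        · exact Or.inr (by omega)
        · exact absurd h (by simp [hUM])
    · have h := hall2 U (Finset.mem_univ _)
      rw [mem_reverse] at h
      rcases mem_append.mp h with h | h
      · rw [hBfin] at h
        simp only [mem_cons, mem_append, mem_replicate, mem_singleton] at h
        rcases h with h | ⟨h, -⟩ | h
        · exact absurd h hUV
        · exact Or.inr (by omega)
        · exact absurd h (by simp [hUM])
      · exact Or.inl h
    · rw [hw1, hBfin, Gw]
      simp

lemma fin3_six (V M U V' M' U' : Fin 3) (h1 : M ≠ V) (h2 : U ≠ M) (h3 : U ≠ V)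
    (h4 : M' ≠ V') (h5 : U' ≠ M') (h6 : U' ≠ V') :
    (V' = V ∧ M' = M ∧ U' = U) ∨ (V' = M ∧ M' = V ∧ U' = U) ∨
    (V' = V ∧ M' = U ∧ U' = M) ∨ (V' = U ∧ M' = M ∧ U' = V) ∨
    (V' = M ∧ M' = U ∧ U' = V) ∨ (V' = U ∧ M' = V ∧ U' = M) := by
  revert h1 h2 h3 h4 h5 h6; revert V M U V' M' U'; decide

lemma matching {k : ℕ} (hk : 2 ≤ k) {x V U M z : Fin 3} {p r q : ℕ}
    (hMV : M ≠ V) (hUM : U ≠ M) (hUV : U ≠ V)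
    (hx : x = V ∨ x = U) (hz : z = M ∨ z = U)
    (hxr : x = U ∨ 1 ≤ r) (hzr : z = U ∨ 1 ≤ r) (hp : 1 ≤ p) (hq : 1 ≤ q)
    {A0' A1' : List (Fin 3)} {V' M' U' : Fin 3} {r' : ℕ}
    (hM'V' : M' ≠ V') (hU'M' : U' ≠ M') (hU'V' : U' ≠ V')
    (hM'A0 : M' ∉ A0') (hV'A1 : V' ∉ A1')
    (hA0sub : ∀ b ∈ A0', b = V' ∨ b = U') (hA1sub : ∀ b ∈ A1', b = M' ∨ b = U')
    (hUA0 : U' ∈ A0' ∨ 1 ≤ r') (hUA1 : U' ∈ A1' ∨ 1 ≤ r')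
    (hcong : SimonCongr k (Wrd x V U M z p r q) (Gw A0' V' U' M' r' A1')) :
    V' = V ∧ M' = M ∧ U' = U ∧
      A0' = replicate A0'.length x ∧ 1 ≤ A0'.length ∧
      A1' = replicate A1'.length z ∧ 1 ≤ A1'.length := by
  have hxM : x ≠ M := by rcases hx with h | h <;> rw [h] <;> [exact fun hh => hMV hh.symm;
    exact hUM]
  have hzV : z ≠ V := by rcases hz with h | h <;> rw [h] <;> [exact hMV; exact hUV]
  have hMU : M ≠ U := fun h => hUM h.symm
  have hVU : V ≠ U := fun h => hUV h.symm
  have hMrep : M ∉ replicate p x := fun h => hxM (eq_of_mem_replicate h).symm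
  have hVrep : V ∉ replicate q z := fun h => hzV (eq_of_mem_replicate h).symm
  -- transports
  have tp : ∀ {s : List (Fin 3)}, s.length = 2 →
      (s <+ Wrd x V U M z p r q ↔ s <+ Gw A0' V' U' M' r' A1') := by
    intro s hs
    exact hcong s (by omega)
  -- basic forward facts
  have fw_MC : ∀ {c}, [M, c] <+ Wrd x V U M z p r q → c = z := by
    intro c h
    rw [Wrd_eq_Gw] at h
    exact eq_of_mem_replicate (f_MC hMrep (Ne.symm (fun h' => hMV h'.symm)) hMU h)
  have fw_CV : ∀ {c}, [c, V] <+ Wrd x V U M z p r q → c = x := by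
    intro c h
    rw [Wrd_eq_Gw] at h
    exact eq_of_mem_replicate (f_CV hVrep hVU (fun h' => hMV h'.symm) h)
  have fw'_MC : ∀ {c}, [M', c] <+ Gw A0' V' U' M' r' A1' → c ∈ A1' :=
    fun h => f_MC hM'A0 hM'V' (fun h' => hU'M' h'.symm) h
  have fw'_CV : ∀ {c}, [c, V'] <+ Gw A0' V' U' M' r' A1' → c ∈ A0' :=
    fun h => f_CV hV'A1 (fun h' => hU'V' h'.symm) (fun h' => hM'V' h'.symm) h
  -- negated pair facts
  have hMVnot_w : ¬ [M, V] <+ Wrd x V U M z p r q := by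
    intro h
    exact hzV (fw_MC h).symm
  have hM'V'not_w' : ¬ [M', V'] <+ Gw A0' V' U' M' r' A1' := by
    intro h
    exact hV'A1 (fw'_MC h)
  have hMVnot_w' : ¬ [M, V] <+ Gw A0' V' U' M' r' A1' :=
    fun h => hMVnot_w ((tp (by simp)).mpr h)
  have hM'V'not_w : ¬ [M', V'] <+ Wrd x V U M z p r q :=
    fun h => hM'V'not_w' ((tp (by simp)).mp h)
  have hvm'_w : [V', M'] <+ Wrd x V U M z p r q := (tp (by simp)).mpr c_VM
  -- case analysis
  have hmain : V' = V ∧ M' = M ∧ U' = U := by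
    rcases fin3_six V M U V' M' U' hMV hUM hUV hM'V' hU'M' hU'V' with
      h | ⟨e1, e2, e3⟩ | ⟨e1, e2, e3⟩ | ⟨e1, e2, e3⟩ | ⟨e1, e2, e3⟩ | ⟨e1, e2, e3⟩
    · exact h
    · -- (b) V' = M, M' = V
      exfalso
      apply hMVnot_w
      have h1 : [M, V] = [V', M'] := by rw [e1, e2]
      rw [h1]
      exact hvm'_w
    · -- (c) V' = V, M' = U, U' = M
      exfalso
      have hxV : x = V := by
        rcases hx with h | h
        · exact h
        · exfalso
          apply hM'V'not_w
          have h1 : [M', V'] = [U, V] := by rw [e1, e2]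
          rw [h1, Wrd_eq_Gw]
          exact c_CV (h ▸ hu_rep hp)
      have hr' : 1 ≤ r' := by
        rcases hUA0 with h | h
        · exfalso
          apply hMVnot_w'
          have h1 : [M, V] = [U', V'] := by rw [e1, e3]
          rw [h1]
          exact c_CV h
        · exact h
      have hzU : z = U := by
        have h1 : [M, U] <+ Gw A0' V' U' M' r' A1' := by
          have h2 : [M, U] = [U', M'] := by rw [e2, e3]
          rw [h2]
          exact c_UM hr'
        exact (fw_MC ((tp (by simp)).mpr h1)).symm
      have hr1 : 1 ≤ r := by
        rcases hxr with h | h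
        · exact absurd (hxV.symm.trans h) hVU
        · exact h
      have hUA1' : U' ∈ A1' := by
        have h1 : [M', U'] <+ Wrd x V U M z p r q := by
          have h2 : [M', U'] = [U, M] := by rw [e2, e3]
          rw [h2, Wrd_eq_Gw]
          exact c_UM hr1
        exact fw'_MC ((tp (by simp)).mp h1)
      have hcnt : (2:ℕ) ≤ count U' (Gw A0' V' U' M' r' A1') := by
        have h1 : 1 ≤ count U' A1' := count_pos_iff.mpr hUA1'
        simp [Gw, count_append, count_cons, count_replicate, Ne.symm hU'V', Ne.symm hU'M']
        omega
      have h2 : [U', U'] <+ Wrd x V U M z p r q := by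
        have := rep_sub_iff_count.mpr hcnt
        exact (tp (by simp)).mpr (by simpa using this)
      rw [e3] at h2
      have hfin : (2:ℕ) ≤ count M (Wrd x V U M z p r q) := by
        have := rep_sub_iff_count.mp (show replicate 2 M <+ Wrd x V U M z p r q from
          by simpa using h2)
        simpa using this
      rw [hxV, hzU] at hfin
      simp [Wrd, count_append, count_cons, count_replicate, Ne.symm hMV, hUM] at hfin
    · -- (d) V' = U, M' = M, U' = V
      exfalso
      have hzM : z = M := by
        rcases hz with h | h
        · exact h
        · exfalso
          apply hM'V'not_w
          have h2 : [M', V'] = [M, U] := by rw [e1, e2]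
          rw [h2, ← h, Wrd_eq_Gw]
          exact c_MC (hu_rep hq)
      have hr' : 1 ≤ r' := by
        rcases hUA1 with h | h
        · exfalso
          apply hMVnot_w'
          have h1 : [M, V] = [M', U'] := by rw [e2, e3]
          rw [h1]
          exact c_MC h
        · exact h
      have hxU : x = U := by
        have h1 : [U, V] <+ Gw A0' V' U' M' r' A1' := by
          have h2 : [U, V] = [V', U'] := by rw [e1, e3]
          rw [h2]
          exact c_VU hr'
        exact (fw_CV ((tp (by simp)).mpr h1)).symm
      have hr1 : 1 ≤ r := by
        rcases hzr with h | h
        · exact absurd (hzM.symm.trans h) hMU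
        · exact h
      have hUA0' : U' ∈ A0' := by
        have h1 : [U', V'] <+ Wrd x V U M z p r q := by
          have h2 : [U', V'] = [V, U] := by rw [e1, e3]
          rw [h2, Wrd_eq_Gw]
          exact c_VU hr1
        exact fw'_CV ((tp (by simp)).mp h1)
      have hcnt : (2:ℕ) ≤ count U' (Gw A0' V' U' M' r' A1') := by
        have h1 : 1 ≤ count U' A0' := count_pos_iff.mpr hUA0'
        simp [Gw, count_append, count_cons, count_replicate, Ne.symm hU'V', Ne.symm hU'M']
        omega
      have h2 : [U', U'] <+ Wrd x V U M z p r q := by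
        have := rep_sub_iff_count.mpr hcnt
        exact (tp (by simp)).mpr (by simpa using this)
      rw [e3] at h2
      have hfin : (2:ℕ) ≤ count V (Wrd x V U M z p r q) := by
        have := rep_sub_iff_count.mp (show replicate 2 V <+ Wrd x V U M z p r q from
          by simpa using h2)
        simpa using this
      rw [hxU, hzM] at hfin
      simp [Wrd, count_append, count_cons, count_replicate, hUV, hMV] at hfin
    · -- (e) V' = M, M' = U, U' = V
      exfalso
      apply hMVnot_w'
      have h2 : [M, V] = [V', U'] := by rw [e1, e3]
      rw [h2]
      rcases hUA1 with h | h
      · exact c_VC h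
      · exact c_VU h
    · -- (f) V' = U, M' = V, U' = M
      exfalso
      apply hM'V'not_w
      have h2 : [M', V'] = [V, U] := by rw [e1, e2]
      rw [h2, Wrd_eq_Gw]
      rcases hzr with h | h
      · exact c_VC (h ▸ hu_rep hq)
      · exact c_VU h
  obtain ⟨e1, e2, e3⟩ := hmain
  refine ⟨e1, e2, e3, ?_, ?_, ?_, ?_⟩
  · rw [eq_replicate_iff]
    refine ⟨rfl, fun b hb => ?_⟩
    have h1 : [b, V] <+ Gw A0' V' U' M' r' A1' := by
      rw [show [b, V] = [b, V'] by rw [e1]]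
      exact c_CV hb
    exact fw_CV ((tp (by simp)).mpr h1)
  · have hxA0 : x ∈ A0' := by
      have h1 : [x, V'] <+ Wrd x V U M z p r q := by
        rw [show [x, V'] = [x, V] by rw [e1], Wrd_eq_Gw]
        exact c_CV (hu_rep hp)
      exact fw'_CV ((tp (by simp)).mp h1)
    exact length_pos_of_mem ( hxA0)
  · rw [eq_replicate_iff]
    refine ⟨rfl, fun b hb => ?_⟩
    have h1 : [M, b] <+ Gw A0' V' U' M' r' A1' := by
      rw [show [M, b] = [M', b] by rw [e2]]
      exact c_MC hb
    exact fw_MC ((tp (by simp)).mpr h1)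
  · have hzA1 : z ∈ A1' := by
      have h1 : [M', z] <+ Wrd x V U M z p r q := by
        rw [show [M', z] = [M, z] by rw [e2], Wrd_eq_Gw]
        exact c_MC (hu_rep hq)
      exact fw'_MC ((tp (by simp)).mp h1)
    exact length_pos_of_mem ( hzA1)

lemma mins_of_congr {k : ℕ} (hk : 2 ≤ k) {x V U M z : Fin 3} {p r q p' r' q' : ℕ}
    (hMV : M ≠ V) (hUM : U ≠ M) (hUV : U ≠ V)
    (hx : x = V ∨ x = U) (hz : z = M ∨ z = U)
    (hcong : SimonCongr k (Wrd x V U M z p r q) (Wrd x V U M z p' r' q')) :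
    min p (k-1) = min p' (k-1) ∧ min q (k-1) = min q' (k-1) ∧
    min r (k - ((if x = U then 1 else 0) + (if z = U then 1 else 0)))
      = min r' (k - ((if x = U then 1 else 0) + (if z = U then 1 else 0))) := by
  have hMU : M ≠ U := fun h => hUM h.symm
  have hVU : V ≠ U := fun h => hUV h.symm
  have hVM : V ≠ M := fun h => hMV h.symm
  have hzV : z ≠ V := by rcases hz with h | h <;> rw [h] <;> [exact hMV; exact hUV]
  have hxM : x ≠ M := by rcases hx with h | h <;> rw [h] <;> [exact hVM; exact hUM]
  have hMx : M ≠ x := fun h => hxM h.symm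
  have hVz : V ≠ z := fun h => hzV h.symm
  refine ⟨?_, ?_, ?_⟩
  · -- p
    rcases hx with hxV | hxU
    · rw [hxV] at hcong
      have h1 : min (p+1) k = min (p'+1) k := by
        apply bounds_min
        intro n hn
        rw [← meas_p_V (u := U) (z := z) (p := p) (r := r) (q := q) hMV hUV hzV,
          ← meas_p_V (u := U) (z := z) (p := p') (r := r') (q := q') hMV hUV hzV]
        exact hcong (replicate n V) (by simpa using hn)
      omega
    · rw [hxU] at hcong
      apply bounds_min
      intro n hn
      rw [← meas_p_U (z := z) (p := p) (r := r) (q := q) hVU hVM hVz,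
        ← meas_p_U (z := z) (p := p') (r := r') (q := q') hVU hVM hVz]
      exact hcong (replicate n U ++ [V]) (by simp; omega)
  · -- q
    rcases hz with hzM | hzU
    · rw [hzM] at hcong
      have h1 : min (q+1) k = min (q'+1) k := by
        apply bounds_min
        intro n hn
        rw [← meas_q_M (v := V) (u := U) (p := p) (r := r) (q := q) hxM hVM hUM,
          ← meas_q_M (v := V) (u := U) (p := p') (r := r') (q := q') hxM hVM hUM]
        exact hcong (replicate n M) (by simpa using hn)
      omega
    · rw [hzU] at hcong
      apply bounds_min
      intro n hn
      rw [← meas_q_U (v := V) (p := p) (r := r) (q := q) hMx hMV hMU,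
        ← meas_q_U (v := V) (p := p') (r := r') (q := q') hMx hMV hMU]
      exact hcong (M :: replicate n U) (by simp; omega)
  · -- r
    rcases hx with hxV | hxU
    · rcases hz with hzM | hzU
      · rw [hxV, hzM] at hcong
        rw [hxV, hzM, if_neg hVU, if_neg hMU, Nat.sub_zero]
        apply bounds_min
        intro n hn
        rw [← meas_r_00 (p := p) (q := q) hUV hUV hUM hUM,
          ← meas_r_00 (p := p') (q := q') hUV hUV hUM hUM]
        exact hcong (replicate n U) (by simpa using hn)
      · rw [hxV, hzU] at hcong
        rw [hxV, hzU, if_neg hVU, if_pos rfl]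
        apply bounds_min
        intro n hn
        rw [← meas_r_01 (p := p) (q := q) hMU hUV hUV,
          ← meas_r_01 (p := p') (q := q') hMU hUV hUV]
        exact hcong (replicate n U ++ [M]) (by simp; omega)
    · rcases hz with hzM | hzU
      · rw [hxU, hzM] at hcong
        rw [hxU, hzM, if_pos rfl, if_neg hMU]
        apply bounds_min
        intro n hn
        rw [← meas_r_10 (p := p) (q := q) hVU hUM hUM,
          ← meas_r_10 (p := p') (q := q') hVU hUM hUM]
        exact hcong (V :: replicate n U) (by simp; omega)
      · rw [hxU, hzU] at hcong
        rw [hxU, hzU, if_pos rfl]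
        apply bounds_min
        intro n hn
        rw [← meas_r_11 (p := p) (q := q) hVU hMU,
          ← meas_r_11 (p := p') (q := q') hVU hMU]
        exact hcong (V :: (replicate n U ++ [M])) (by simp; omega)

end Fin3

/-- ternary words with one arch whose `α`-factors are both unary
(and modus ≠ reverse modus): `w ∼ₖ w̃` iff the `α`-factors are `(k−1)`-congruent,
the modi and reverse modi coincide, and the cores are `(k−c)`-congruent with
`c = δ_{y ⪯ α₀} + δ_{y ⪯ α₁}`. -/
theorem ternary_both_alpha_unary_congr (k : ℕ) (hk : 1 < k)
    (w w' : List (Fin 3)) (A B A' B' : ℕ → List (Fin 3))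
    (hw : IsAlphaBetaFact w 1 A B) (hw' : IsAlphaBetaFact w' 1 A' B')
    (hiw : iotaUniv w = 1) (hiw' : iotaUniv w' = 1)
    (hcard₀ : (A 0).toFinset.card = 1) (hcard₁ : (A 1).toFinset.card = 1)
    (mw ww : Fin 3)
    (hm : (B 1).getLast? = some mw) (hrm : (B 1).head? = some ww)
    (hne : mw ≠ ww)
    (y : Fin 3) (hy1 : y ≠ mw) (hy2 : y ≠ ww) :
    SimonCongr k w w' ↔
      (SimonCongr (k - 1) (A 0) (A' 0) ∧ SimonCongr (k - 1) (A 1) (A' 1) ∧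
        (B 1).getLast? = (B' 1).getLast? ∧ (B 1).head? = (B' 1).head? ∧
        SimonCongr (k - ((if y ∈ A 0 then 1 else 0) + (if y ∈ A 1 then 1 else 0)))
          (coreOf (B 1)) (coreOf (B' 1))) := by
  have hk2 : 2 ≤ k := hk
  obtain ⟨Ve, Me, Ue, x, z, p, r, q, hhead, hlast, hMV, hUM, hUV, hA0, hA1, hB, hp, hq,
    hxVU, hzMU, hxr, hzr, hweq⟩ := extract hw hcard₀ hcard₁
  obtain rfl : mw = Me := Option.some_inj.mp (hm.symm.trans hlast)
  obtain rfl : ww = Ve := Option.some_inj.mp (hrm.symm.trans hhead)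
  obtain rfl : y = Ue := fin3_resolve hMV hUM hUV hy1 hy2
  have hVU : ww ≠ y := fun h => hUV h.symm
  have hMU : mw ≠ y := fun h => hUM h.symm
  have hxM : x ≠ mw := by
    rcases hxVU with h | h <;> rw [h] <;> [exact fun hh => hMV hh.symm; exact hUM]
  have hzV : z ≠ ww := by rcases hzMU with h | h <;> rw [h] <;> [exact hMV; exact hUV]
  set Cv : ℕ := (if x = y then 1 else 0) + (if z = y then 1 else 0) with hCv
  have hifA0 : (if y ∈ A 0 then (1:ℕ) else 0) = (if x = y then 1 else 0) := by
    have hiff : (y ∈ A 0) ↔ (x = y) := by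
      rw [hA0, mem_replicate]
      constructor
      · rintro ⟨-, h⟩; exact h.symm
      · intro h; exact ⟨by omega, h.symm⟩
    simp [hiff]
  have hifA1 : (if y ∈ A 1 then (1:ℕ) else 0) = (if z = y then 1 else 0) := by
    have hiff : (y ∈ A 1) ↔ (z = y) := by
      rw [hA1, mem_replicate]
      constructor
      · rintro ⟨-, h⟩; exact h.symm
      · intro h; exact ⟨by omega, h.symm⟩
    simp [hiff]
  have hcoreB : coreOf (B 1) = replicate r y := by
    rw [hB]; simp [coreOf]
  constructor
  · -- forward direction
    intro hcong
    rcases extract' hw' with ⟨c, hBc, hdA0, hdA1, hw'eq⟩ |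
      ⟨ww', mw', y', r', hhead', hlast', hM'ww', hU'mw', hU'ww', hB', hM'A0, hV'A1,
        hA0sub, hA1sub, hUA0, hUA1, hw'eq⟩
    · -- singleton β-factor for w' : impossible
      exfalso
      have hMVw' : [mw, ww] <+ w' := by
        rw [hw'eq]
        by_cases hMc : mw = c
        · have hVc : ww ≠ c := fun h => hMV (hMc.trans h.symm)
          have hV1 : ww ∈ A' 1 := hdA1 ww hVc
          rw [hMc]
          exact (cons_sublist_cons.mpr (singleton_sublist.mpr hV1)).trans
            (sublist_append_right (A' 0) _)
        · have hM0 : mw ∈ A' 0 := hdA0 mw hMc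
          by_cases hVc : ww = c
          · rw [hVc]
            exact pair_sub hM0 mem_cons_self
          · exact pair_sub hM0 (mem_cons_of_mem c (hdA1 ww hVc))
      have h2 : [mw, ww] <+ w := (hcong [mw, ww] (by simp; omega)).mpr hMVw'
      rw [hweq, Wrd_eq_Gw] at h2
      have hMrep : mw ∉ replicate p x := fun h => hxM (eq_of_mem_replicate h).symm
      have h3 := f_MC hMrep hMV hMU h2
      exact hzV (eq_of_mem_replicate h3).symm
    · -- main case
      rw [hweq, hw'eq] at hcong
      obtain ⟨e1, e2, e3, hA0'rep, hp0, hA1'rep, hq0⟩ := matching hk2 hMV hUM hUV hxVU hzMU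
        hxr hzr hp hq hM'ww' hU'mw' hU'ww' hM'A0 hV'A1 hA0sub hA1sub hUA0 hUA1 hcong
      obtain ⟨p', hA0'⟩ : ∃ n, A' 0 = replicate n x := ⟨_, hA0'rep⟩
      obtain ⟨q', hA1'⟩ : ∃ n, A' 1 = replicate n z := ⟨_, hA1'rep⟩
      have hGW : Gw (A' 0) ww' y' mw' r' (A' 1) = Wrd x ww y mw z p' r' q' := by
        rw [hA0', hA1', e1, e2, e3, Wrd_eq_Gw]
      rw [hGW] at hcong
      obtain ⟨hminp, hminq, hminr⟩ := mins_of_congr hk2 hMV hUM hUV hxVU hzMU hcong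
      have hcoreB' : coreOf (B' 1) = replicate r' y := by
        rw [hB', e3]; simp [coreOf]
      refine ⟨?_, ?_, ?_, ?_, ?_⟩
      · rw [hA0, hA0']
        exact simonCongr_replicate hminp
      · rw [hA1, hA1']
        exact simonCongr_replicate hminq
      · rw [hlast, hlast', e2]
      · rw [hhead, hhead', e1]
      · rw [hcoreB, hcoreB', hifA0, hifA1]
        exact simonCongr_replicate hminr
  · -- backward direction
    rintro ⟨hS0, hS1, hL, hH, hCore⟩
    rcases extract' hw' with ⟨c, hBc, -, -, -⟩ |
      ⟨ww', mw', y', r', hhead', hlast', hM'ww', hU'mw', hU'ww', hB', hM'A0, hV'A1,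
        hA0sub, hA1sub, hUA0, hUA1, hw'eq⟩
    · exfalso
      have e1 : mw = c := by
        have hgl : (B' 1).getLast? = some c := by simp [hBc]
        have h1 := hlast.symm.trans (hL.trans hgl)
        exact Option.some_inj.mp h1
      have e2 : ww = c := by
        have hhd : (B' 1).head? = some c := by simp [hBc]
        have h1 := hhead.symm.trans (hH.trans hhd)
        exact Option.some_inj.mp h1
      exact hMV (e1.trans e2.symm)
    · have eM : mw' = mw := by
        have h1 := hlast.symm.trans (hL.trans hlast')
        exact (Option.some_inj.mp h1).symm
      have eV : ww' = ww := by
        have h1 := hhead.symm.trans (hH.trans hhead')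
        exact (Option.some_inj.mp h1).symm
      have eU : y' = y := by
        refine fin3_resolve hMV hUM hUV ?_ ?_
        · rw [← eM]; exact hU'mw'
        · rw [← eV]; exact hU'ww'
      have hk1 : (1:ℕ) ≤ k - 1 := by omega
      -- α-factors of w' are unary with the same letters
      have hbA0 : ∀ b ∈ A' 0, b = x := by
        intro b hb
        have h1 : [b] <+ A 0 := (hS0 [b] (by simp; omega)).mpr (singleton_sublist.mpr hb)
        rw [hA0] at h1
        exact eq_of_mem_replicate (mem_of_singleton_sublist h1)
      have hbA1 : ∀ b ∈ A' 1, b = z := by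
        intro b hb
        have h1 : [b] <+ A 1 := (hS1 [b] (by simp; omega)).mpr (singleton_sublist.mpr hb)
        rw [hA1] at h1
        exact eq_of_mem_replicate (mem_of_singleton_sublist h1)
      have hxA0' : x ∈ A' 0 := by
        refine mem_of_singleton_sublist ((hS0 [x] (by simp; omega)).mp ?_)
        rw [hA0]
        exact singleton_sublist.mpr (hu_rep hp)
      have hzA1' : z ∈ A' 1 := by
        refine mem_of_singleton_sublist ((hS1 [z] (by simp; omega)).mp ?_)
        rw [hA1]
        exact singleton_sublist.mpr (hu_rep hq)
      obtain ⟨p', hA0'⟩ : ∃ n, A' 0 = replicate n x :=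
        ⟨(A' 0).length, eq_replicate_iff.mpr ⟨rfl, hbA0⟩⟩
      obtain ⟨q', hA1'⟩ : ∃ n, A' 1 = replicate n z :=
        ⟨(A' 1).length, eq_replicate_iff.mpr ⟨rfl, hbA1⟩⟩
      have hp' : 1 ≤ p' := by
        rw [hA0'] at hxA0'
        rcases mem_replicate.mp hxA0' with ⟨h, -⟩
        omega
      have hq' : 1 ≤ q' := by
        rw [hA1'] at hzA1'
        rcases mem_replicate.mp hzA1' with ⟨h, -⟩
        omega
      have hcoreB' : coreOf (B' 1) = replicate r' y := by
        rw [hB', eU]; simp [coreOf]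
      -- min equalities
      have hminp : min p (k-1) = min p' (k-1) := by
        rw [hA0, hA0'] at hS0
        exact simonCongr_rep_min hS0
      have hminq : min q (k-1) = min q' (k-1) := by
        rw [hA1, hA1'] at hS1
        exact simonCongr_rep_min hS1
      have hminr : min r (k - Cv) = min r' (k - Cv) := by
        rw [hcoreB, hcoreB', hifA0, hifA1, ← hCv] at hCore
        exact simonCongr_rep_min hCore
      -- primed side constraints
      rw [eU, hA0'] at hUA0
      rw [eU, hA1'] at hUA1
      have hxr' : x = y ∨ 1 ≤ r' := by
        rcases hUA0 with h | h
        · exact Or.inl (eq_of_mem_replicate h).symm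
        · exact Or.inr h
      have hzr' : z = y ∨ 1 ≤ r' := by
        rcases hUA1 with h | h
        · exact Or.inl (eq_of_mem_replicate h).symm
        · exact Or.inr h
      have hw'W : w' = Wrd x ww y mw z p' r' q' := by
        rw [hw'eq, hA0', hA1', eV, eM, eU, Wrd_eq_Gw]
      intro s hs
      rw [hweq, hw'W]
      constructor
      · intro h
        refine Wrd_transfer hk2 hVU hMU hxVU hzMU hxr hzr hp hq hp' hq'
          ?_ ?_ ?_ hs h
        · omega
        · omega
        · rw [← hCv]; omega
      · intro h
        refine Wrd_transfer hk2 hVU hMU hxVU hzMU hxr' hzr' hp' hq' hp hq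
          ?_ ?_ ?_ hs h
        · omega
        · omega
        · rw [← hCv]; omega
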